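/- Every solution of the nonlinear AC power flow equations is a solution of the QC relaxation: if z ∈ ℝ^{4N} satisfies the AC power flow equations, then there exist auxiliary variables z_QC (given by the true values of the products, squares and trigonometric terms) such that all QC envelope inequalities are satisfied, provided all variables lie within their stated bounds. Consequently the AC feasibility set is contained in the QC feasibility set. -/

import Mathlib

section helpers

lemma my_sin_ge_sub_cube {x : ℝ} (hx : 0 ≤ x) : x - x ^ 3 / 6 ≤ Real.sin x := by
  have hd : ∀ t : ℝ, HasDerivAt (fun t => Real.sin t - t + t ^ 3 / 6)
      (Real.cos t - 1 + t ^ 2 / 2) t := by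
    intro t
    have h1 := (Real.hasDerivAt_sin t).sub (hasDerivAt_id t)
    have h2 := (hasDerivAt_pow 3 t).div_const 6
    have := h1.add h2
    exact this.congr_deriv (by push_cast; ring)
  have mono : MonotoneOn (fun t => Real.sin t - t + t ^ 3 / 6) (Set.Ici (0:ℝ)) := by
    apply monotoneOn_of_deriv_nonneg (convex_Ici 0)
    · exact (Continuous.continuousOn (by continuity))
    · intro t ht
      exact (hd t).differentiableAt.differentiableWithinAt
    · intro t ht
      rw [(hd t).deriv]
      nlinarith [Real.one_sub_sq_div_two_le_cos (x := t)]
  have := mono (Set.self_mem_Ici) (Set.mem_Ici.2 hx) hx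
  simp at this
  linarith

lemma my_cos_le_quartic {x : ℝ} (h0 : 0 ≤ x) (h2 : x ≤ 2) :
    Real.cos x ≤ 1 - x ^ 2 / 2 + x ^ 4 / 24 := by
  have hs := my_sin_ge_sub_cube (x := x / 2) (by linarith)
  have hnn : (0:ℝ) ≤ x / 2 - (x / 2) ^ 3 / 6 := by
    nlinarith [mul_nonneg h0 (mul_nonneg h0 h0), mul_le_mul h2 h2 h0 (by norm_num : (0:ℝ) ≤ 2)]
  have hcos : Real.cos x = 1 - 2 * Real.sin (x / 2) ^ 2 := by
    have h := Real.cos_two_mul' (x / 2)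
    have h' := Real.sin_sq_add_cos_sq (x / 2)
    rw [show 2 * (x / 2) = x by ring] at h
    linarith
  have hsq : (x / 2 - (x / 2) ^ 3 / 6) ^ 2 ≤ Real.sin (x / 2) ^ 2 := by nlinarith
  nlinarith [hsq, pow_nonneg h0 6]

/-- Key endpoint inequality: `3 x cos x ≤ sin x + sin 2x` for `0 ≤ x ≤ π/4`. -/
lemma my_endpoint {x : ℝ} (h0 : 0 ≤ x) (h1 : x ≤ Real.pi / 4) :
    3 * x * Real.cos x ≤ Real.sin x * (1 + 2 * Real.cos x) := by
  have hx8 : x ≤ 0.8 := by nlinarith [Real.pi_lt_d2]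
  have hs1 := my_sin_ge_sub_cube h0
  have hs2 : Real.sin x ≤ x := Real.sin_le h0
  have hc1 : 1 - x ^ 2 / 2 ≤ Real.cos x := Real.one_sub_sq_div_two_le_cos
  have hc2 := my_cos_le_quartic h0 (by linarith)
  have hint1 : (0:ℝ) ≤ (Real.sin x - (x - x ^ 3 / 6)) * (1 + 2 * (1 - x ^ 2 / 2 + x ^ 4 / 24)) := by
    apply mul_nonneg (by linarith); nlinarith
  have hint2 : (0:ℝ) ≤ (3 * x - 2 * Real.sin x) * ((1 - x ^ 2 / 2 + x ^ 4 / 24) - Real.cos x) := by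
    apply mul_nonneg (by linarith) (by linarith)
  have hint3 : (0:ℝ) ≤ x ^ 5 / 8 - x ^ 7 / 72 := by
    nlinarith [pow_nonneg h0 5, mul_le_mul hx8 hx8 h0 (by norm_num : (0:ℝ) ≤ 0.8)]
  nlinarith [hint1, hint2, hint3]

lemma my_G_deriv (x t : ℝ) :
    HasDerivAt (fun t => Real.cos x * t - Real.sin t) (Real.cos x - Real.cos t) t := by
  exact (((hasDerivAt_id t).const_mul (Real.cos x)).sub (Real.hasDerivAt_sin t)).congr_deriv (by ring)

lemma my_G_mono {x a b : ℝ} (hab : a ≤ b)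
    (h : ∀ t ∈ Set.Icc a b, Real.cos t ≤ Real.cos x) :
    Real.cos x * a - Real.sin a ≤ Real.cos x * b - Real.sin b := by
  have mono : MonotoneOn (fun t => Real.cos x * t - Real.sin t) (Set.Icc a b) := by
    apply monotoneOn_of_deriv_nonneg (convex_Icc a b)
    · exact (Continuous.continuousOn (by continuity))
    · intro t ht
      exact (my_G_deriv x t).differentiableAt.differentiableWithinAt
    · intro t ht
      rw [(my_G_deriv x t).deriv]
      rw [interior_Icc] at ht
      have := h t ⟨ht.1.le, ht.2.le⟩
      linarith
  exact mono (Set.left_mem_Icc.2 hab) (Set.right_mem_Icc.2 hab) hab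

lemma my_G_anti {x a b : ℝ} (hab : a ≤ b)
    (h : ∀ t ∈ Set.Icc a b, Real.cos x ≤ Real.cos t) :
    Real.cos x * b - Real.sin b ≤ Real.cos x * a - Real.sin a := by
  have anti : AntitoneOn (fun t => Real.cos x * t - Real.sin t) (Set.Icc a b) := by
    apply antitoneOn_of_deriv_nonpos (convex_Icc a b)
    · exact (Continuous.continuousOn (by continuity))
    · intro t ht
      exact (my_G_deriv x t).differentiableAt.differentiableWithinAt
    · intro t ht
      rw [(my_G_deriv x t).deriv]
      rw [interior_Icc] at ht
      have := h t ⟨ht.1.le, ht.2.le⟩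
      linarith
  exact anti (Set.left_mem_Icc.2 hab) (Set.right_mem_Icc.2 hab) hab

/-- Upper linear envelope of `sin` on `[-2x, 2x]`, tangent at `x`. -/
lemma my_sin_upper {x θ : ℝ} (hx0 : 0 < x) (hx : x ≤ Real.pi / 4) (hθ : |θ| ≤ 2 * x) :
    Real.sin θ ≤ Real.cos x * (θ - x) + Real.sin x := by
  have hpi := Real.pi_pos
  rcases abs_le.1 hθ with ⟨hl, hr⟩
  have key : Real.cos x * x - Real.sin x ≤ Real.cos x * θ - Real.sin θ := by
    rcases le_or_gt x θ with hc | hc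
    · apply my_G_mono hc
      intro t ht
      exact Real.cos_le_cos_of_nonneg_of_le_pi hx0.le (by linarith [ht.2] : t ≤ Real.pi) ht.1
    rcases le_or_gt (-x) θ with hc2 | hc2
    · apply my_G_anti hc.le
      intro t ht
      have habs : |t| ≤ x := abs_le.2 ⟨by linarith [ht.1], ht.2⟩
      calc Real.cos x ≤ Real.cos |t| :=
            Real.cos_le_cos_of_nonneg_of_le_pi (abs_nonneg t) (by linarith) habs
        _ = Real.cos t := Real.cos_abs t
    · have step1 : Real.cos x * x - Real.sin x ≤
          Real.cos x * (-(2 * x)) - Real.sin (-(2 * x)) := by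
        rw [Real.sin_neg, Real.sin_two_mul]
        nlinarith [my_endpoint hx0.le hx]
      refine step1.trans (my_G_mono (by linarith) ?_)
      intro t ht
      have habs1 : x ≤ |t| := by
        rw [abs_of_nonpos (by linarith [ht.2] : t ≤ 0)]; linarith [ht.2]
      have habs2 : |t| ≤ Real.pi := by
        rw [abs_of_nonpos (by linarith [ht.2] : t ≤ 0)]; linarith [ht.1]
      calc Real.cos t = Real.cos |t| := (Real.cos_abs t).symm
        _ ≤ Real.cos x := Real.cos_le_cos_of_nonneg_of_le_pi hx0.le habs2 habs1
  linarith

/-- Chord bound from concavity of `sin` on `[0, π]`. -/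
lemma my_sin_chord {t u : ℝ} (ht : 0 ≤ t) (htu : t ≤ u) (hu0 : 0 < u) (hu : u ≤ Real.pi) :
    t / u * Real.sin u ≤ Real.sin t := by
  have hc := strictConcaveOn_sin_Icc.concaveOn
  have h0m : (0:ℝ) ∈ Set.Icc 0 Real.pi := by constructor <;> [rfl; positivity]
  have hum : u ∈ Set.Icc 0 Real.pi := ⟨hu0.le, hu⟩
  have ha : (0:ℝ) ≤ 1 - t / u := by
    have : t / u ≤ 1 := (div_le_one hu0).2 htu
    linarith
  have hb : (0:ℝ) ≤ t / u := by positivity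
  have := hc.2 h0m hum ha hb (by ring)
  simpa [Real.sin_zero, smul_eq_mul, mul_div_cancel₀, div_mul_cancel₀, hu0.ne'] using this
end helpers

lemma my_cos_half (y : ℝ) : Real.cos y = 1 - 2 * Real.sin (y / 2) ^ 2 := by
  have h := Real.cos_two_mul' (y / 2)
  have h' := Real.sin_sq_add_cos_sq (y / 2)
  rw [show 2 * (y / 2) = y by ring] at h
  linarith


/-- Exactness of the QC relaxation on true solutions: if the voltage magnitudes
and the phase angle difference lie within their stated bounds, then the
auxiliary variables given by the true values of the product `v_i v_j`, the
squares `v_i²`, `v_j²` and the trigonometric terms `sin θ`, `cos θ` satisfy all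
QC envelope inequalities (McCormick, quadratic, and trigonometric envelopes).
Consequently every AC power flow solution is feasible for the QC relaxation. -/
theorem ac_solution_satisfies_qc_envelopes
    (vli vui vlj vuj θb vi vj θ : ℝ)
    (hθb0 : 0 < θb) (hθbπ : θb ≤ Real.pi / 2)
    (hvi : vi ∈ Set.Icc vli vui) (hvj : vj ∈ Set.Icc vlj vuj)
    (hθ : |θ| ≤ θb) :
    -- McCormick envelope for the product v_i v_j
    (vi * vj ≥ vli * vj + vlj * vi - vli * vlj ∧
     vi * vj ≥ vui * vj + vuj * vi - vui * vuj ∧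
     vi * vj ≤ vli * vj + vuj * vi - vli * vuj ∧
     vi * vj ≤ vui * vj + vlj * vi - vui * vlj) ∧
    -- quadratic envelopes for the squares
    (vi ^ 2 ≤ (vli + vui) * vi - vli * vui ∧
     vj ^ 2 ≤ (vlj + vuj) * vj - vlj * vuj) ∧
    -- linear envelopes for sin
    (Real.sin θ ≤ Real.cos (θb / 2) * (θ - θb / 2) + Real.sin (θb / 2) ∧
     Real.sin θ ≥ Real.cos (θb / 2) * (θ + θb / 2) - Real.sin (θb / 2)) ∧
    -- envelopes for cos
    (Real.cos θ ≤ 1 - ((1 - Real.cos θb) / θb ^ 2) * θ ^ 2 ∧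
     Real.cos θ ≥ Real.cos θb) := by
  obtain ⟨hi1, hi2⟩ := hvi
  obtain ⟨hj1, hj2⟩ := hvj
  have hpi := Real.pi_pos
  have hx0 : 0 < θb / 2 := by linarith
  have hx4 : θb / 2 ≤ Real.pi / 4 := by linarith
  have hθ' : |θ| ≤ 2 * (θb / 2) := by linarith
  refine ⟨⟨by nlinarith, by nlinarith, by nlinarith, by nlinarith⟩,
    ⟨by nlinarith, by nlinarith⟩, ⟨?_, ?_⟩, ?_, ?_⟩
  · exact my_sin_upper hx0 hx4 hθ'
  · have h := my_sin_upper hx0 hx4 (θ := -θ) (by rwa [abs_neg])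
    rw [Real.sin_neg] at h
    linarith
  · -- cos upper envelope
    have habs : 0 ≤ |θ| := abs_nonneg θ
    rcases abs_le.1 hθ with ⟨hl, hr⟩
    have hsb : 0 ≤ Real.sin (θb / 2) :=
      Real.sin_nonneg_of_nonneg_of_le_pi hx0.le (by linarith)
    have hchord := my_sin_chord (t := |θ| / 2) (u := θb / 2)
      (by positivity) (by linarith) hx0 (by linarith)
    have heq : |θ| / 2 / (θb / 2) = |θ| / θb := by
      rw [div_div_div_comm]; norm_num
    rw [heq] at hchord
    have hLnn : 0 ≤ |θ| / θb * Real.sin (θb / 2) := by positivity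
    have hsq : (|θ| / θb * Real.sin (θb / 2)) ^ 2 ≤ Real.sin (|θ| / 2) ^ 2 := by
      nlinarith
    have h1 : (1 - Real.cos θb) / θb ^ 2 * θ ^ 2
        = 2 * (|θ| / θb * Real.sin (θb / 2)) ^ 2 := by
      rw [my_cos_half θb, mul_pow, div_pow, sq_abs]
      field_simp
      ring
    have h2 : Real.cos θ = 1 - 2 * Real.sin (|θ| / 2) ^ 2 := by
      rw [← Real.cos_abs]; exact my_cos_half _
    rw [h1, h2]
    linarith
  · calc Real.cos θb ≤ Real.cos |θ| :=
        Real.cos_le_cos_of_nonneg_of_le_pi (abs_nonneg θ) (by linarith) hθ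
      _ = Real.cos θ := Real.cos_abs θ
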